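/- arXiv:1909.09777 — 5 statements merged into one kernel-verified Lean document; each statement's English description precedes it below -/
import Mathlib

section
/- Let B = [x1,y1,x2,y2] be a box, 0 < T ≤ 1, and let x̄1 satisfy x1 ≤ x̄1 ≤ x2 − (x2−x1)·T (so the candidate top-left corner lies in Region I). Set Ī = (x2−x̄1)(y2−y1) and define ȳ1 = y2 − (Ī/T + Ī − A(B))/(x2−x̄1). Then the box B̄ = [x̄1, ȳ1, x2, y2] satisfies ȳ1 ≤ y1, ȳ1 < y2, and IoU(B,B̄) = T. -/
structure Box where
  x1 : ℝ
  y1 : ℝ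
  x2 : ℝ
  y2 : ℝ

def Box.valid (B : Box) : Prop := B.x1 < B.x2 ∧ B.y1 < B.y2

noncomputable def area (B : Box) : ℝ := (B.x2 - B.x1) * (B.y2 - B.y1)

noncomputable def inter (B C : Box) : ℝ :=
  (min C.x2 B.x2 - max C.x1 B.x1) * (min C.y2 B.y2 - max C.y1 B.y1)

noncomputable def iou (B C : Box) : ℝ := inter B C / (area B + area C - inter B C)

theorem tl_region_I_curve (B : Box) (hB : B.valid) (T : ℝ)
    (hT0 : 0 < T) (hT1 : T ≤ 1) (xb : ℝ)
    (hx1 : B.x1 ≤ xb) (hx2 : xb ≤ B.x2 - (B.x2 - B.x1) * T) :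
    let Ibar : ℝ := (B.x2 - xb) * (B.y2 - B.y1)
    let yb : ℝ := B.y2 - (Ibar / T + Ibar - area B) / (B.x2 - xb)
    yb ≤ B.y1 ∧ yb < B.y2 ∧ iou B ⟨xb, yb, B.x2, B.y2⟩ = T := by
  intro Ibar yb
  have hw : 0 < B.x2 - B.x1 := sub_pos.mpr hB.1
  have hh : 0 < B.y2 - B.y1 := sub_pos.mpr hB.2
  have hu : (B.x2 - B.x1) * T ≤ B.x2 - xb := by linarith
  have hu0 : 0 < B.x2 - xb := lt_of_lt_of_le (by positivity) hu
  set u := B.x2 - xb with hudef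
  set h := B.y2 - B.y1 with hhdef
  set w := B.x2 - B.x1 with hwdef
  have hwh : w * h ≤ u * h / T := by
    rw [le_div_iff₀ hT0]; nlinarith
  have hD : u * h ≤ u * h / T + u * h - w * h := by linarith
  have hD0 : 0 < u * h / T + u * h - w * h := lt_of_lt_of_le (by positivity) hD
  have hyb : yb = B.y2 - (u * h / T + u * h - w * h) / u := by
    simp only [yb, Ibar, area]
    rfl
  have h1 : yb ≤ B.y1 := by
    rw [hyb]
    have : h ≤ (u * h / T + u * h - w * h) / u := by
      rw [le_div_iff₀ hu0]; nlinarith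
    linarith
  have h2 : yb < B.y2 := by
    rw [hyb]
    have : 0 < (u * h / T + u * h - w * h) / u := div_pos hD0 hu0
    linarith
  refine ⟨h1, h2, ?_⟩
  have hmax : max xb B.x1 = xb := max_eq_left hx1
  have hmaxy : max yb B.y1 = B.y1 := max_eq_right h1
  have hTne : T ≠ 0 := ne_of_gt hT0
  have hune : u ≠ 0 := ne_of_gt hu0
  have hinter : inter B ⟨xb, yb, B.x2, B.y2⟩ = u * h := by
    simp [inter, hmax, hmaxy]
    rfl
  have harea : area ⟨xb, yb, B.x2, B.y2⟩ = u * h / T + u * h - w * h := by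
    simp only [area, hyb]
    field_simp
    ring
  have hden : area B + area ⟨xb, yb, B.x2, B.y2⟩ - inter B ⟨xb, yb, B.x2, B.y2⟩ = u * h / T := by
    rw [harea, hinter]; simp only [area]; ring
  rw [iou, hden, hinter]
  rw [div_div_eq_mul_div, mul_comm, mul_div_assoc]
  rw [div_self (by positivity : u * h ≠ 0), mul_one]
end

section
/- Let B = [x1,y1,x2,y2] and 0 < T ≤ 1. For candidate top-left corners in Region IV (x̄1 ≤ x1 and ȳ1 ≤ y1, bottom-right corner fixed at (x2,y2)), the minimum value of ȳ1 for which a box with IoU exactly T exists is ȳ1_min = (y2·(T−1) + y1)/T; moreover for ȳ1 in the range [ȳ1_min, y1], the unique x̄1 ≤ x1 giving IoU(B,B̄) = T with B̄ = [x̄1,ȳ1,x2,y2] is x̄1 = x2 − A(B)/(T·(y2−ȳ1)). -/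
lemma iou_region_IV (B : Box) (xb yb : ℝ) (hxb : xb ≤ B.x1) (hyb : yb ≤ B.y1) :
    iou B ⟨xb, yb, B.x2, B.y2⟩ =
      (B.x2 - B.x1) * (B.y2 - B.y1) / ((B.x2 - xb) * (B.y2 - yb)) := by
  simp only [iou, inter, area, min_self, max_eq_right hxb, max_eq_right hyb]
  congr 1
  ring

theorem tl_region_IV (B : Box) (hB : B.valid) (T : ℝ)
    (hT0 : 0 < T) (hT1 : T ≤ 1) :
    let ymin : ℝ := (B.y2 * (T - 1) + B.y1) / T
    (∀ yb : ℝ, yb < ymin → ¬ ∃ xb : ℝ, xb ≤ B.x1 ∧ iou B ⟨xb, yb, B.x2, B.y2⟩ = T) ∧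
    (∀ yb : ℝ, ymin ≤ yb → yb ≤ B.y1 →
      ∀ xb : ℝ, xb ≤ B.x1 →
        (iou B ⟨xb, yb, B.x2, B.y2⟩ = T ↔
          xb = B.x2 - area B / (T * (B.y2 - yb)))) := by
  obtain ⟨hx, hy⟩ := hB
  intro ymin
  have hymin : ymin ≤ B.y1 := by
    rw [div_le_iff₀ hT0]; nlinarith
  constructor
  · rintro yb hyb ⟨xb, hxb, hiou⟩
    have hyb1 : yb ≤ B.y1 := le_of_lt (lt_of_lt_of_le hyb hymin)
    have hybT : yb * T < B.y2 * (T - 1) + B.y1 := by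
      have := hyb
      rw [lt_div_iff₀ hT0] at this; linarith
    have hD : (B.x2 - xb) * (B.y2 - yb) > 0 := by
      have h1 : 0 < B.x2 - xb := by linarith
      have h2 : 0 < B.y2 - yb := by linarith
      positivity
    rw [iou_region_IV B xb yb hxb hyb1, div_eq_iff hD.ne'] at hiou
    nlinarith [mul_le_mul_of_nonneg_right hxb (le_of_lt hT0),
      mul_pos (sub_pos.mpr hx) (sub_pos.mpr hy)]
  · intro yb _ hyb1 xb hxb
    have hy2 : 0 < B.y2 - yb := by linarith
    have hD : (B.x2 - xb) * (B.y2 - yb) > 0 := by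
      have h1 : 0 < B.x2 - xb := by linarith
      positivity
    rw [iou_region_IV B xb yb hxb hyb1, div_eq_iff hD.ne']
    constructor
    · intro h
      rw [area, eq_sub_iff_add_eq, ← eq_sub_iff_add_eq', div_eq_iff (by positivity)]
      linear_combination h
    · intro h
      subst h
      rw [area]
      field_simp
      ring
end

section
/- Let B = [x1,y1,x2,y2] and 0 < T ≤ 1, and suppose B̄ = [x̄1,ȳ1,x̄2,ȳ2] satisfies IoU(B,B̄) ≥ T with x̄1 ≥ x1 and ȳ1 ≥ y1 and bottom-right corner equal to that of B (x̄2 = x2, ȳ2 = y2, Region I configuration where B̄ ⊆ B). Then x̄1 ≤ x2 − (x2−x1)·T and ȳ1 ≤ y2 − (y2−y1)·T. Conversely, if both inequalities hold together with (x2−x̄1)(y2−ȳ1) ≥ T·A(B), then IoU(B,B̄) ≥ T. -/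
theorem region_I_feasibility (B : Box) (hB : B.valid) (T : ℝ)
    (hT0 : 0 < T) (hT1 : T ≤ 1) (xb yb : ℝ)
    (hx1 : B.x1 ≤ xb) (hx2 : xb < B.x2) (hy1 : B.y1 ≤ yb) (hy2 : yb < B.y2) :
    (T ≤ iou B ⟨xb, yb, B.x2, B.y2⟩ →
      xb ≤ B.x2 - (B.x2 - B.x1) * T ∧ yb ≤ B.y2 - (B.y2 - B.y1) * T) ∧
    ((xb ≤ B.x2 - (B.x2 - B.x1) * T ∧ yb ≤ B.y2 - (B.y2 - B.y1) * T ∧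
        T * area B ≤ (B.x2 - xb) * (B.y2 - yb)) →
      T ≤ iou B ⟨xb, yb, B.x2, B.y2⟩) := by
  obtain ⟨hbx, hby⟩ := hB
  have hA : 0 < area B := mul_pos (by linarith) (by linarith)
  have hiou : iou B ⟨xb, yb, B.x2, B.y2⟩ = (B.x2 - xb) * (B.y2 - yb) / area B := by
    simp only [iou, inter, area, min_self, max_eq_left hx1, max_eq_left hy1]
    ring_nf
  rw [hiou, le_div_iff₀ hA]
  constructor
  · intro h
    simp only [area] at h
    constructor
    · nlinarith [mul_le_mul_of_nonneg_left (sub_le_sub_left hy1 B.y2) (sub_pos.mpr hx2).le,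
        sub_pos.mpr hby]
    · nlinarith [mul_le_mul_of_nonneg_right (sub_le_sub_left hx1 B.x2) (sub_pos.mpr hy2).le,
        sub_pos.mpr hbx]
  · rintro ⟨-, -, h⟩
    linarith
end

section
/- The set of feasible top-left corners degenerates as T → 1: for a box B = [x1,y1,x2,y2] and threshold T ∈ (0,1], every box B̄ = [x̄1,ȳ1,x2,y2] (sharing B's bottom-right corner) with IoU(B,B̄) ≥ T has |x̄1 − x1| ≤ (1−T)/T · (x2−x1) and |ȳ1 − y1| ≤ (1−T)/T · (y2−y1). In particular, when T = 1 the only feasible top-left corner is (x1,y1). -/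
lemma aux_bound (T a b ab bb q : ℝ) (hT0 : 0 < T) (ha : 0 < a) (hab : 0 < ab)
    (hq : 0 < q) (hqb : q ≤ b) (hqbb : q ≤ bb)
    (hTU : T * (a * b + ab * bb - a * q) ≤ a * q) : T * ab ≤ a := by
  have h1 : ab * q ≤ a * b + ab * bb - a * q := by nlinarith
  have h2 : (T * ab) * q ≤ a * q := by nlinarith
  exact le_of_mul_le_mul_right h2 hq

theorem tl_feasible_degenerates (B : Box) (hB : B.valid) (T : ℝ)
    (hT0 : 0 < T) (hT1 : T ≤ 1) (xb yb : ℝ)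
    (hx2 : xb < B.x2) (hy2 : yb < B.y2)
    (hI : 0 < inter B ⟨xb, yb, B.x2, B.y2⟩)
    (hiou : T ≤ iou B ⟨xb, yb, B.x2, B.y2⟩) :
    |xb - B.x1| ≤ (1 - T) / T * (B.x2 - B.x1) ∧
    |yb - B.y1| ≤ (1 - T) / T * (B.y2 - B.y1) ∧
    (T = 1 → xb = B.x1 ∧ yb = B.y1) := by
  obtain ⟨hx, hy⟩ := hB
  simp only [inter, iou, area, min_self] at hI hiou
  set p := B.x2 - max xb B.x1 with hpdef
  set q := B.y2 - max yb B.y1 with hqdef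
  have hp0 : 0 < p := by
    rw [hpdef]; rcases max_cases xb B.x1 with ⟨h, _⟩ | ⟨h, _⟩ <;> rw [h] <;> linarith
  have hq0 : 0 < q := by
    rw [hqdef]; rcases max_cases yb B.y1 with ⟨h, _⟩ | ⟨h, _⟩ <;> rw [h] <;> linarith
  have hpa : p ≤ B.x2 - B.x1 := by
    have := le_max_right xb B.x1; rw [hpdef]; linarith
  have hpab : p ≤ B.x2 - xb := by
    have := le_max_left xb B.x1; rw [hpdef]; linarith
  have hqb : q ≤ B.y2 - B.y1 := by
    have := le_max_right yb B.y1; rw [hqdef]; linarith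
  have hqbb : q ≤ B.y2 - yb := by
    have := le_max_left yb B.y1; rw [hqdef]; linarith
  have hU : 0 < (B.x2 - B.x1) * (B.y2 - B.y1) + (B.x2 - xb) * (B.y2 - yb) - p * q := by
    nlinarith
  have hTU := (le_div_iff₀ hU).mp hiou
  have hxb : T * |xb - B.x1| ≤ (1 - T) * (B.x2 - B.x1) := by
    rcases le_total xb B.x1 with h | h
    · have hpe : p = B.x2 - B.x1 := by rw [hpdef, max_eq_right h]
      rw [hpe] at hTU
      have := aux_bound T (B.x2 - B.x1) (B.y2 - B.y1) (B.x2 - xb) (B.y2 - yb) q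
        hT0 (by linarith) (by linarith) hq0 hqb hqbb hTU
      rw [abs_of_nonpos (by linarith)]
      linarith
    · have hpe : p = B.x2 - xb := by rw [hpdef, max_eq_left h]
      rw [hpe] at hTU
      have := aux_bound T (B.x2 - xb) (B.y2 - yb) (B.x2 - B.x1) (B.y2 - B.y1) q
        hT0 (by linarith) (by linarith) hq0 hqbb hqb (by linarith)
      rw [abs_of_nonneg (by linarith)]
      nlinarith
  have hyb : T * |yb - B.y1| ≤ (1 - T) * (B.y2 - B.y1) := by
    rcases le_total yb B.y1 with h | h
    · have hqe : q = B.y2 - B.y1 := by rw [hqdef, max_eq_right h]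
      rw [hqe] at hTU
      have := aux_bound T (B.y2 - B.y1) (B.x2 - B.x1) (B.y2 - yb) (B.x2 - xb) p
        hT0 (by linarith) (by linarith) hp0 hpa hpab (by linarith)
      rw [abs_of_nonpos (by linarith)]
      linarith
    · have hqe : q = B.y2 - yb := by rw [hqdef, max_eq_left h]
      rw [hqe] at hTU
      have := aux_bound T (B.y2 - yb) (B.x2 - xb) (B.y2 - B.y1) (B.x2 - B.x1) p
        hT0 (by linarith) (by linarith) hp0 hpab hpa (by linarith)
      rw [abs_of_nonneg (by linarith)]
      nlinarith
  have h1 : |xb - B.x1| ≤ (1 - T) / T * (B.x2 - B.x1) := by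
    rw [div_mul_eq_mul_div, le_div_iff₀ hT0]
    nlinarith
  have h2 : |yb - B.y1| ≤ (1 - T) / T * (B.y2 - B.y1) := by
    rw [div_mul_eq_mul_div, le_div_iff₀ hT0]
    nlinarith
  refine ⟨h1, h2, fun hT => ?_⟩
  subst hT
  simp only [sub_self, zero_div, zero_mul] at h1 h2
  constructor
  · have h0 := abs_nonneg (xb - B.x1)
    have := abs_eq_zero.mp (le_antisymm h1 h0); linarith
  · have h0 := abs_nonneg (yb - B.y1)
    have := abs_eq_zero.mp (le_antisymm h2 h0); linarith
end

section
/- Correctness of the two-step generation in the nested case: let B = [x1,y1,x2,y2], T ∈ (0,1], and let (x̄1, ȳ1) satisfy x1 ≤ x̄1 < x2, y1 ≤ ȳ1 < y2 with (x2−x̄1)(y2−ȳ1) ≥ T·A(B). Then there exists a choice of bottom-right corner (x̄2, ȳ2) with x̄1 < x̄2 ≤ x2 and ȳ1 < ȳ2 ≤ y2 such that IoU(B, [x̄1,ȳ1,x̄2,ȳ2]) = T; in particular one may take (x̄2, ȳ2) on the curve (x̄2−x̄1)(ȳ2−ȳ1) = T·A(B) via ȳ2 = ȳ1 + T·A(B)/(x̄2−x̄1)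 for suitable x̄2. -/
theorem br_feasible_nonempty (B : Box) (hB : B.valid) (T : ℝ)
    (hT0 : 0 < T) (hT1 : T ≤ 1) (xb yb : ℝ)
    (hx1 : B.x1 ≤ xb) (hx2 : xb < B.x2) (hy1 : B.y1 ≤ yb) (hy2 : yb < B.y2)
    (hfeas : T * area B ≤ (B.x2 - xb) * (B.y2 - yb)) :
    ∃ xb2 yb2 : ℝ, xb < xb2 ∧ xb2 ≤ B.x2 ∧ yb < yb2 ∧ yb2 ≤ B.y2 ∧
      (xb2 - xb) * (yb2 - yb) = T * area B ∧
      iou B ⟨xb, yb, xb2, yb2⟩ = T := by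
  obtain ⟨hBx, hBy⟩ := hB
  have hA : 0 < area B := mul_pos (by linarith) (by linarith)
  have hTA : 0 < T * area B := mul_pos hT0 hA
  have hxpos : (0:ℝ) < B.x2 - xb := by linarith
  set yb2 := yb + T * area B / (B.x2 - xb) with hyb2
  have hprod : (B.x2 - xb) * (yb2 - yb) = T * area B := by
    rw [hyb2, add_sub_cancel_left]; field_simp
  have hy2' : yb < yb2 := by
    have := div_pos hTA hxpos
    simp [hyb2]; linarith
  have hyle : yb2 ≤ B.y2 := by
    have h : T * area B / (B.x2 - xb) ≤ B.y2 - yb := by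
      rw [div_le_iff₀ hxpos]; linarith [hfeas, mul_comm (B.x2 - xb) (B.y2 - yb)]
    simp only [hyb2]; linarith
  refine ⟨B.x2, yb2, hx2, le_refl _, hy2', hyle, hprod, ?_⟩
  have hinter : inter B ⟨xb, yb, B.x2, yb2⟩ = T * area B := by
    simp only [inter]
    rw [min_self, max_eq_left hx1, min_eq_left hyle, max_eq_left hy1]
    exact hprod
  have harea : area (⟨xb, yb, B.x2, yb2⟩ : Box) = T * area B := by
    simp only [area]; exact hprod
  rw [iou, hinter, harea]
  have : area B + T * area B - T * area B = area B := by ring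
  rw [this, mul_div_assoc, div_self (ne_of_gt hA), mul_one]
end
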